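/- Let 𝒰(x) = [[0, U⁺(x)],[U⁻(x), 0]] with U^±(x) = (1 − cos(2πx) ± √3 sin(2πx))/3, and let M(w₁) ∈ SL(2,ℂ) be the monodromy matrix over one period of the system D_x X + w₁ 𝒰(x) X = 0 (with D_x = −i d/dx, X(0) = I, M(w₁) = X(1)). Then there exists ε > 0 such that for all w₁ ∈ (−ε, ε) ∖ {0}, 1 is not an eigenvalue of M(w₁). -/

import Mathlib

attribute [local instance] Matrix.normedAddCommGroup Matrix.normedSpace

open Matrix Complex Real

/-- The chiral tunneling matrix `𝒰(x) = [[0,U⁺(x)],[U⁻(x),0]]`. -/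
noncomputable def chiralU (x : ℝ) : Matrix (Fin 2) (Fin 2) ℂ :=
  !![0, (((1 - Real.cos (2 * π * x) + Real.sqrt 3 * Real.sin (2 * π * x)) / 3 : ℝ) : ℂ);
     (((1 - Real.cos (2 * π * x) - Real.sqrt 3 * Real.sin (2 * π * x)) / 3 : ℝ) : ℂ), 0]

abbrev Mat2 := Matrix (Fin 2) (Fin 2) ℂ

noncomputable def pfun (x : ℝ) : ℝ := (1 - Real.cos (2 * π * x) + Real.sqrt 3 * Real.sin (2 * π * x)) / 3
noncomputable def mfun (x : ℝ) : ℝ := (1 - Real.cos (2 * π * x) - Real.sqrt 3 * Real.sin (2 * π * x)) / 3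

noncomputable def Bc (x : ℝ) : Mat2 := (-Complex.I) • chiralU x

lemma chiralU_eq (x : ℝ) : chiralU x = !![0, ((pfun x : ℝ) : ℂ); ((mfun x : ℝ) : ℂ), 0] := by
  simp [chiralU, pfun, mfun]

lemma cont_pfun : Continuous pfun := by unfold pfun; fun_prop
lemma cont_mfun : Continuous mfun := by unfold mfun; fun_prop

lemma cont_chiralU : Continuous chiralU := by
  apply continuous_matrix
  intro i j
  fin_cases i <;> fin_cases j <;> simp [chiralU] <;> fun_prop

lemma cont_Bc : Continuous Bc := by
  show Continuous fun x => (-Complex.I) • chiralU x; exact cont_chiralU.const_smul (-Complex.I)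

lemma Bc_apply (x : ℝ) :
    Bc x = !![0, -Complex.I * ((pfun x : ℝ) : ℂ); -Complex.I * ((mfun x : ℝ) : ℂ), 0] := by
  rw [Bc, chiralU_eq]
  ext i j
  fin_cases i <;> fin_cases j <;> simp

lemma abs_pfun_le (x : ℝ) : |pfun x| ≤ 2 := by
  have h1 := Real.neg_one_le_cos (2 * π * x)
  have h2 := Real.cos_le_one (2 * π * x)
  have h3 := Real.neg_one_le_sin (2 * π * x)
  have h4 := Real.sin_le_one (2 * π * x)
  have h5 : Real.sqrt 3 ≤ 2 := by
    rw [show (2:ℝ) = Real.sqrt 4 by rw [show (4:ℝ) = 2^2 by norm_num, Real.sqrt_sq]; norm_num]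
    exact Real.sqrt_le_sqrt (by norm_num)
  have h6 : (0:ℝ) ≤ Real.sqrt 3 := Real.sqrt_nonneg 3
  rw [abs_le]
  constructor <;> rw [pfun] <;> nlinarith [mul_le_mul_of_nonneg_left h4 h6, mul_le_mul_of_nonneg_left h3 h6]

lemma abs_mfun_le (x : ℝ) : |mfun x| ≤ 2 := by
  have h1 := Real.neg_one_le_cos (2 * π * x)
  have h2 := Real.cos_le_one (2 * π * x)
  have h3 := Real.neg_one_le_sin (2 * π * x)
  have h4 := Real.sin_le_one (2 * π * x)
  have h5 : Real.sqrt 3 ≤ 2 := by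
    rw [show (2:ℝ) = Real.sqrt 4 by rw [show (4:ℝ) = 2^2 by norm_num, Real.sqrt_sq]; norm_num]
    exact Real.sqrt_le_sqrt (by norm_num)
  have h6 : (0:ℝ) ≤ Real.sqrt 3 := Real.sqrt_nonneg 3
  rw [abs_le]
  constructor <;> rw [mfun] <;> nlinarith [mul_le_mul_of_nonneg_left h4 h6, mul_le_mul_of_nonneg_left h3 h6]

lemma norm_Bc_le (x : ℝ) : ‖Bc x‖ ≤ 2 := by
  rw [Bc_apply]
  rw [Matrix.norm_le_iff (by norm_num)]
  intro i j
  fin_cases i <;> fin_cases j <;> simp [Complex.norm_real]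
  · exact abs_pfun_le x
  · exact abs_mfun_le x

lemma norm_mat_mul_le (A C : Mat2) : ‖A * C‖ ≤ 2 * ‖A‖ * ‖C‖ := by
  have h0 : (0:ℝ) ≤ ‖A‖ := norm_nonneg A
  have h0' : (0:ℝ) ≤ ‖C‖ := norm_nonneg C
  rw [Matrix.norm_le_iff (by positivity)]
  intro i j
  rw [Matrix.mul_apply, Fin.sum_univ_two]
  have e1 : ‖A i 0 * C 0 j‖ ≤ ‖A‖ * ‖C‖ := by
    rw [norm_mul]
    exact mul_le_mul (Matrix.norm_entry_le_entrywise_sup_norm A)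
      (Matrix.norm_entry_le_entrywise_sup_norm C) (norm_nonneg _) h0
  have e2 : ‖A i 1 * C 1 j‖ ≤ ‖A‖ * ‖C‖ := by
    rw [norm_mul]
    exact mul_le_mul (Matrix.norm_entry_le_entrywise_sup_norm A)
      (Matrix.norm_entry_le_entrywise_sup_norm C) (norm_nonneg _) h0
  calc ‖A i 0 * C 0 j + A i 1 * C 1 j‖ ≤ ‖A i 0 * C 0 j‖ + ‖A i 1 * C 1 j‖ := norm_add_le _ _
    _ ≤ ‖A‖ * ‖C‖ + ‖A‖ * ‖C‖ := add_le_add e1 e2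
    _ = 2 * ‖A‖ * ‖C‖ := by ring

lemma norm_one_mat : ‖(1 : Mat2)‖ ≤ 1 := by
  rw [Matrix.norm_le_iff (by norm_num)]
  intro i j
  fin_cases i <;> fin_cases j <;> simp [Matrix.one_apply]
attribute [local instance] Matrix.normedAddCommGroup Matrix.normedSpace
open Matrix Complex Real MeasureTheory intervalIntegral



noncomputable def trC : Mat2 →L[ℂ] ℂ :=
  LinearMap.toContinuousLinearMap (Matrix.traceLinearMap (Fin 2) ℂ ℂ)

lemma trC_apply (A : Mat2) : trC A = Matrix.trace A := rfl

noncomputable def entryCLM (i j : Fin 2) : Mat2 →L[ℂ] ℂ :=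
  LinearMap.toContinuousLinearMap
    { toFun := fun A => A i j
      map_add' := fun _ _ => rfl
      map_smul' := fun _ _ => rfl }

lemma entryCLM_apply (i j : Fin 2) (A : Mat2) : entryCLM i j A = A i j := rfl

lemma hasDerivAt_entry {f : ℝ → Mat2} {f' : Mat2} {x : ℝ} (h : HasDerivAt f f' x) (i j : Fin 2) :
    HasDerivAt (fun t => f t i j) (f' i j) x := by
  have := ((entryCLM i j).restrictScalars ℝ).hasFDerivAt.comp_hasDerivAt x h
  exact this

lemma hasDerivAt_primitive {E : Type*} [NormedAddCommGroup E] [NormedSpace ℝ E] [CompleteSpace E]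
    {g : ℝ → E} (hg : Continuous g) (x : ℝ) :
    HasDerivAt (fun u => ∫ t in (0:ℝ)..u, g t) (g x) x :=
  integral_hasDerivAt_right (hg.intervalIntegrable _ _)
    (hg.stronglyMeasurableAtFilter _ _) hg.continuousAt

lemma const_of_hasDerivAt_zero {E : Type*} [NormedAddCommGroup E] [NormedSpace ℝ E]
    {f : ℝ → E} (h : ∀ x, HasDerivAt f 0 x) (x : ℝ) : f x = f 0 :=
  is_const_of_deriv_eq_zero (fun y => (h y).differentiableAt)
    (fun y => (h y).deriv) x 0

lemma entry_integral (g : ℝ → Mat2) (hg : Continuous g) (a b : ℝ) (i j : Fin 2) :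
    (∫ t in a..b, g t) i j = ∫ t in a..b, g t i j := by
  have := (entryCLM i j).intervalIntegral_comp_comm (hg.intervalIntegrable a b : IntervalIntegrable _ MeasureTheory.volume a b)
  exact this.symm

lemma trace_integral (g : ℝ → Mat2) (hg : Continuous g) (a b : ℝ) :
    trC (∫ t in a..b, g t) = ∫ t in a..b, trC (g t) := by
  exact (trC.intervalIntegral_comp_comm (hg.intervalIntegrable a b : IntervalIntegrable _ MeasureTheory.volume a b)).symm


noncomputable def Gp (s : ℝ) (t : ℝ) : ℝ :=
  (t - Real.sin (2 * π * t) / (2 * π) - s * Real.cos (2 * π * t) / (2 * π)) / 3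

lemma hasDerivAt_Gp (s t : ℝ) :
    HasDerivAt (Gp s) ((1 - Real.cos (2 * π * t) + s * Real.sin (2 * π * t)) / 3) t := by
  have h0 : HasDerivAt (fun t : ℝ => 2 * π * t) (2 * π) t := by
    simpa using (hasDerivAt_id t).const_mul (2 * π)
  have hsin : HasDerivAt (fun t : ℝ => Real.sin (2 * π * t)) (Real.cos (2 * π * t) * (2 * π)) t :=
    (Real.hasDerivAt_sin _).comp t h0
  have hcos : HasDerivAt (fun t : ℝ => Real.cos (2 * π * t)) (-Real.sin (2 * π * t) * (2 * π)) t :=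
    (Real.hasDerivAt_cos _).comp t h0
  have h := (((hasDerivAt_id t).sub (hsin.div_const (2 * π))).sub
    ((hcos.const_mul s).div_const (2 * π))).div_const 3
  refine h.congr_deriv ?_
  have hπ : (2 * π) ≠ 0 := by positivity
  field_simp
  ring

lemma integral_pfun : ∫ t in (0:ℝ)..1, pfun t = 1 / 3 := by
  have h : ∀ t ∈ Set.uIcc (0:ℝ) 1, HasDerivAt (Gp (Real.sqrt 3)) (pfun t) t :=
    fun t _ => hasDerivAt_Gp (Real.sqrt 3) t
  have hint : IntervalIntegrable pfun MeasureTheory.volume 0 1 := by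
    apply Continuous.intervalIntegrable; unfold pfun; fun_prop
  rw [intervalIntegral.integral_eq_sub_of_hasDerivAt h hint]
  have hπ : (2 * π) ≠ 0 := by positivity
  simp only [Gp, mul_one, mul_zero, Real.sin_two_pi, Real.cos_two_pi, Real.sin_zero, Real.cos_zero]
  field_simp
  ring

lemma integral_mfun : ∫ t in (0:ℝ)..1, mfun t = 1 / 3 := by
  have h : ∀ t ∈ Set.uIcc (0:ℝ) 1, HasDerivAt (Gp (-Real.sqrt 3)) (mfun t) t := by
    intro t _
    have := hasDerivAt_Gp (-Real.sqrt 3) t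
    simpa [mfun, sub_eq_add_neg] using this
  have hint : IntervalIntegrable mfun MeasureTheory.volume 0 1 := by
    apply Continuous.intervalIntegrable; unfold mfun; fun_prop
  rw [intervalIntegral.integral_eq_sub_of_hasDerivAt h hint]
  have hπ : (2 * π) ≠ 0 := by positivity
  simp only [Gp, mul_one, mul_zero, Real.sin_two_pi, Real.cos_two_pi, Real.sin_zero, Real.cos_zero]
  field_simp
  ring
section Key

variable {Y : ℝ → Mat2} {ω : ℂ}

lemma cont_of_sol (hY : ∀ x, HasDerivAt Y (ω • (Bc x * Y x)) x) : Continuous Y :=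
  continuous_iff_continuousAt.2 fun x => (hY x).differentiableAt.continuousAt

lemma picard_step (hY : ∀ x, HasDerivAt Y (ω • (Bc x * Y x)) x) (hY0 : Y 0 = 1) (x : ℝ) :
    Y x = 1 + ω • ∫ t in (0:ℝ)..x, Bc t * Y t := by
  have contY : Continuous Y := cont_of_sol hY
  have hcont : Continuous fun t => Bc t * Y t := cont_Bc.matrix_mul contY
  have hd : ∀ x, HasDerivAt (fun x => Y x - ω • ∫ t in (0:ℝ)..x, Bc t * Y t) 0 x := by
    intro x
    have h1 := (hY x).sub ((hasDerivAt_primitive hcont x).const_smul ω)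
    rw [sub_self] at h1; exact h1
  have h := const_of_hasDerivAt_zero hd x
  simp only [intervalIntegral.integral_same, smul_zero, sub_zero, hY0] at h
  have := sub_eq_iff_eq_add'.1 h
  rw [this]
  exact add_comm _ _

lemma expansion (hY : ∀ x, HasDerivAt Y (ω • (Bc x * Y x)) x) (hY0 : Y 0 = 1) :
    Y 1 = 1 + ω • (∫ t in (0:ℝ)..1, Bc t)
        + (ω ^ 2) • (∫ t in (0:ℝ)..1, Bc t * ∫ u in (0:ℝ)..t, Bc u)
        + (ω ^ 3) • (∫ t in (0:ℝ)..1, Bc t *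
            ∫ u in (0:ℝ)..t, Bc u * ∫ v in (0:ℝ)..u, Bc v * Y v) := by
  have contY : Continuous Y := cont_of_sol hY
  have hc1 : Continuous fun t => Bc t * Y t := cont_Bc.matrix_mul contY
  set F1 : ℝ → Mat2 := fun x => ∫ t in (0:ℝ)..x, Bc t * Y t with hF1
  have contF1 : Continuous F1 := continuous_iff_continuousAt.2 fun x =>
    (hasDerivAt_primitive hc1 x).differentiableAt.continuousAt
  have hc2 : Continuous fun t => Bc t * F1 t := cont_Bc.matrix_mul contF1
  set F2 : ℝ → Mat2 := fun x => ∫ t in (0:ℝ)..x, Bc t * F1 t with hF2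
  have contF2 : Continuous F2 := continuous_iff_continuousAt.2 fun x =>
    (hasDerivAt_primitive hc2 x).differentiableAt.continuousAt
  have contBint : Continuous fun x => ∫ t in (0:ℝ)..x, Bc t := continuous_iff_continuousAt.2
    fun x => (hasDerivAt_primitive cont_Bc x).differentiableAt.continuousAt
  -- step 2 : F1 x = ∫ Bc + ω • F2 x
  have step2 : ∀ x : ℝ, F1 x = (∫ t in (0:ℝ)..x, Bc t) + ω • F2 x := by
    intro x
    have hint : ∀ t : ℝ, Bc t * Y t = Bc t + ω • (Bc t * F1 t) := by
      intro t
      rw [picard_step hY hY0 t]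
      rw [mul_add, mul_one, mul_smul_comm]
    calc F1 x = ∫ t in (0:ℝ)..x, (Bc t + ω • (Bc t * F1 t)) := by
          rw [hF1]; exact intervalIntegral.integral_congr fun t _ => hint t
      _ = (∫ t in (0:ℝ)..x, Bc t) + ∫ t in (0:ℝ)..x, ω • (Bc t * F1 t) := by
          exact intervalIntegral.integral_add (cont_Bc.intervalIntegrable _ _)
            ((hc2.const_smul ω).intervalIntegrable _ _)
      _ = (∫ t in (0:ℝ)..x, Bc t) + ω • F2 x := by rw [intervalIntegral.integral_smul, hF2]
  -- step 3 : F2 1 = ∫ Bc t * ∫ Bc + ω • ∫ Bc t * F2 t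
  have hc3 : Continuous fun t => Bc t * ∫ u in (0:ℝ)..t, Bc u := cont_Bc.matrix_mul contBint
  have hc4 : Continuous fun t => Bc t * F2 t := cont_Bc.matrix_mul contF2
  have step3 : F2 1 = (∫ t in (0:ℝ)..1, Bc t * ∫ u in (0:ℝ)..t, Bc u)
      + ω • ∫ t in (0:ℝ)..1, Bc t * F2 t := by
    have hint : ∀ t : ℝ, Bc t * F1 t
        = Bc t * (∫ u in (0:ℝ)..t, Bc u) + ω • (Bc t * F2 t) := by
      intro t
      rw [step2 t, mul_add, mul_smul_comm]
    calc F2 1 = ∫ t in (0:ℝ)..1, (Bc t * (∫ u in (0:ℝ)..t, Bc u) + ω • (Bc t * F2 t)) := by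
          rw [hF2]; exact intervalIntegral.integral_congr fun t _ => hint t
      _ = (∫ t in (0:ℝ)..1, Bc t * ∫ u in (0:ℝ)..t, Bc u)
            + ∫ t in (0:ℝ)..1, ω • (Bc t * F2 t) :=
          intervalIntegral.integral_add (hc3.intervalIntegrable _ _)
            ((hc4.const_smul ω).intervalIntegrable _ _)
      _ = _ := by rw [intervalIntegral.integral_smul]
  have e1 := picard_step hY hY0 1
  rw [show (∫ t in (0:ℝ)..1, Bc t * Y t) = F1 1 from rfl, step2 1, step3] at e1
  -- F2 inside step3's RHS last integral uses F1-def; unfold the statement target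
  rw [e1]
  simp only [smul_add, smul_smul]
  rw [hF2]
  simp only [hF1]
  ring_nf
  rw [add_assoc, add_assoc]

end Key

lemma trace_Bc (t : ℝ) : Matrix.trace (Bc t) = 0 := by
  rw [Bc_apply, Matrix.trace_fin_two]
  simp

lemma trace_J1 : Matrix.trace (∫ t in (0:ℝ)..1, Bc t) = 0 := by
  have h := trace_integral Bc cont_Bc 0 1
  rw [trC_apply] at h
  rw [h]
  simp only [trC_apply, trace_Bc]
  simp

noncomputable def Pf (t : ℝ) : ℝ := ∫ u in (0:ℝ)..t, pfun u
noncomputable def Mf (t : ℝ) : ℝ := ∫ u in (0:ℝ)..t, mfun u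

lemma contPf : Continuous Pf := continuous_iff_continuousAt.2 fun x =>
  (hasDerivAt_primitive cont_pfun x).differentiableAt.continuousAt
lemma contMf : Continuous Mf := continuous_iff_continuousAt.2 fun x =>
  (hasDerivAt_primitive cont_mfun x).differentiableAt.continuousAt

lemma intBc_apply (t : ℝ) :
    (∫ u in (0:ℝ)..t, Bc u) = !![0, -Complex.I * ((Pf t : ℝ) : ℂ);
      -Complex.I * ((Mf t : ℝ) : ℂ), 0] := by
  have hp : (∫ x in (0:ℝ)..t, ((pfun x : ℝ) : ℂ)) = ((Pf t : ℝ) : ℂ) :=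
    RCLike.intervalIntegral_ofReal
  have hm : (∫ x in (0:ℝ)..t, ((mfun x : ℝ) : ℂ)) = ((Mf t : ℝ) : ℂ) :=
    RCLike.intervalIntegral_ofReal
  ext i j
  rw [entry_integral Bc cont_Bc 0 t i j]
  fin_cases i <;> fin_cases j <;> simp only [Bc_apply] <;>
    simp [intervalIntegral.integral_const_mul, hp, hm]

lemma trace_mul_intBc (t : ℝ) :
    Matrix.trace (Bc t * ∫ u in (0:ℝ)..t, Bc u)
      = -(((pfun t * Mf t + mfun t * Pf t : ℝ)) : ℂ) := by
  rw [intBc_apply, Bc_apply, Matrix.trace_fin_two]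
  simp [Matrix.mul_apply, Fin.sum_univ_two]
  ring_nf
  simp [Complex.I_sq]
  ring

lemma trace_J2 :
    Matrix.trace (∫ t in (0:ℝ)..1, Bc t * ∫ u in (0:ℝ)..t, Bc u) = -(1/9 : ℂ) := by
  have contBint : Continuous fun x => ∫ t in (0:ℝ)..x, Bc t := continuous_iff_continuousAt.2
    fun x => (hasDerivAt_primitive cont_Bc x).differentiableAt.continuousAt
  have hc : Continuous fun t => Bc t * ∫ u in (0:ℝ)..t, Bc u := cont_Bc.matrix_mul contBint
  have h := trace_integral _ hc 0 1
  rw [trC_apply] at h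
  rw [h]
  simp only [trC_apply, trace_mul_intBc]
  rw [intervalIntegral.integral_neg]
  have hreal : (∫ t in (0:ℝ)..1, (pfun t * Mf t + mfun t * Pf t)) = 1/9 := by
    have hD : ∀ t ∈ Set.uIcc (0:ℝ) 1, HasDerivAt (fun t => Pf t * Mf t)
        (pfun t * Mf t + mfun t * Pf t) t := by
      intro t _
      have := (hasDerivAt_primitive cont_pfun t).mul (hasDerivAt_primitive cont_mfun t)
      have e : pfun t * Mf t + Pf t * mfun t = pfun t * Mf t + mfun t * Pf t := by ring
      rw [← e]
      exact this
    have hint : IntervalIntegrable (fun t => pfun t * Mf t + mfun t * Pf t)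
        MeasureTheory.volume 0 1 :=
      ((cont_pfun.mul contMf).add (cont_mfun.mul contPf)).intervalIntegrable _ _
    rw [intervalIntegral.integral_eq_sub_of_hasDerivAt hD hint]
    have h0 : Pf 0 = 0 := intervalIntegral.integral_same
    have h0' : Mf 0 = 0 := intervalIntegral.integral_same
    have h1 : Pf 1 = 1/3 := integral_pfun
    have h1' : Mf 1 = 1/3 := integral_mfun
    rw [h0, h1, h1']
    norm_num
  rw [show (∫ x in (0:ℝ)..1, (((pfun x * Mf x + mfun x * Pf x : ℝ)) : ℂ))
      = ((∫ x in (0:ℝ)..1, (pfun x * Mf x + mfun x * Pf x) : ℝ) : ℂ) from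
    RCLike.intervalIntegral_ofReal, hreal]
  norm_num

lemma mem_Icc_of_uIoc {u v : ℝ} (hu : u ∈ Set.Icc (0:ℝ) 1) (hv : v ∈ Set.uIoc 0 u) :
    v ∈ Set.Icc (0:ℝ) 1 := by
  rcases Set.mem_uIoc.1 hv with h | h <;>
    exact ⟨by linarith [hu.1, hu.2, h.1, h.2], by linarith [hu.1, hu.2, h.1, h.2]⟩

lemma trace_norm_le (A : Mat2) : ‖Matrix.trace A‖ ≤ 2 * ‖A‖ := by
  rw [Matrix.trace_fin_two]
  calc ‖A 0 0 + A 1 1‖ ≤ ‖A 0 0‖ + ‖A 1 1‖ := norm_add_le _ _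
    _ ≤ ‖A‖ + ‖A‖ := add_le_add (Matrix.norm_entry_le_entrywise_sup_norm A)
        (Matrix.norm_entry_le_entrywise_sup_norm A)
    _ = 2 * ‖A‖ := by ring

section KeyBound

variable {Y : ℝ → Mat2} {ω : ℂ}

lemma gronwall_sol (hω : ‖ω‖ ≤ 1) (hY : ∀ x, HasDerivAt Y (ω • (Bc x * Y x)) x)
    (hY0 : Y 0 = 1) : ∀ x ∈ Set.Icc (0:ℝ) 1, ‖Y x‖ ≤ Real.exp 4 := by
  have contY : Continuous Y := cont_of_sol hY
  have hg := norm_le_gronwallBound_of_norm_deriv_right_le (f := Y)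
    (f' := fun x => ω • (Bc x * Y x)) (δ := 1) (K := 4) (ε := 0) (a := 0) (b := 1)
    contY.continuousOn (fun x _ => (hY x).hasDerivWithinAt)
    (by rw [hY0]; exact norm_one_mat)
    (by
      intro x _
      rw [norm_smul]
      have h1 : ‖Bc x * Y x‖ ≤ 2 * ‖Bc x‖ * ‖Y x‖ := norm_mat_mul_le _ _
      have h2 : 2 * ‖Bc x‖ * ‖Y x‖ ≤ 2 * 2 * ‖Y x‖ := by
        have := norm_Bc_le x
        have := norm_nonneg (Y x)
        nlinarith
      have h3 : ‖ω‖ * ‖Bc x * Y x‖ ≤ 1 * (2 * 2 * ‖Y x‖) := by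
        apply mul_le_mul hω (le_trans h1 h2) (norm_nonneg _) (by norm_num)
      linarith)
  intro x hx
  have := hg x hx
  rw [gronwallBound_ε0] at this
  calc ‖Y x‖ ≤ 1 * Real.exp (4 * (x - 0)) := this
    _ ≤ Real.exp 4 := by
        rw [one_mul]
        exact Real.exp_le_exp.2 (by nlinarith [hx.1, hx.2])

lemma key (hω : ‖ω‖ ≤ 1) (hY : ∀ x, HasDerivAt Y (ω • (Bc x * Y x)) x) (hY0 : Y 0 = 1) :
    ∃ r : ℂ, ‖r‖ ≤ 128 * Real.exp 4 ∧
      Matrix.trace (Y 1) = 2 - ω ^ 2 * (1/9 : ℂ) + ω ^ 3 * r := by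
  have contY : Continuous Y := cont_of_sol hY
  have hc1 : Continuous fun t => Bc t * Y t := cont_Bc.matrix_mul contY
  have contF1 : Continuous fun x => ∫ t in (0:ℝ)..x, Bc t * Y t :=
    continuous_iff_continuousAt.2 fun x =>
      (hasDerivAt_primitive hc1 x).differentiableAt.continuousAt
  have hc2 : Continuous fun t => Bc t * ∫ v in (0:ℝ)..t, Bc v * Y v :=
    cont_Bc.matrix_mul contF1
  have contF2 : Continuous fun x => ∫ u in (0:ℝ)..x, Bc u * ∫ v in (0:ℝ)..u, Bc v * Y v :=
    continuous_iff_continuousAt.2 fun x =>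
      (hasDerivAt_primitive hc2 x).differentiableAt.continuousAt
  have hc3 : Continuous fun t => Bc t * ∫ u in (0:ℝ)..t, Bc u * ∫ v in (0:ℝ)..u, Bc v * Y v :=
    cont_Bc.matrix_mul contF2
  set R : Mat2 := ∫ t in (0:ℝ)..1, Bc t * ∫ u in (0:ℝ)..t, Bc u * ∫ v in (0:ℝ)..u, Bc v * Y v
    with hR
  refine ⟨Matrix.trace R, ?_, ?_⟩
  · -- bound
    have E0 : (0:ℝ) ≤ Real.exp 4 := (Real.exp_pos 4).le
    have hYb := gronwall_sol hω hY hY0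
    have h1 : ∀ u ∈ Set.Icc (0:ℝ) 1, ‖∫ v in (0:ℝ)..u, Bc v * Y v‖ ≤ 4 * Real.exp 4 := by
      intro u hu
      have := intervalIntegral.norm_integral_le_of_norm_le_const
        (f := fun v => Bc v * Y v) (a := 0) (b := u) (C := 4 * Real.exp 4) (by
          intro v hv
          have hvI := mem_Icc_of_uIoc hu hv
          calc ‖Bc v * Y v‖ ≤ 2 * ‖Bc v‖ * ‖Y v‖ := norm_mat_mul_le _ _
            _ ≤ 2 * 2 * Real.exp 4 := by
                have := norm_Bc_le v; have := hYb v hvI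
                have := norm_nonneg (Y v); have := norm_nonneg (Bc v)
                nlinarith
            _ = 4 * Real.exp 4 := by ring)
      calc ‖∫ v in (0:ℝ)..u, Bc v * Y v‖ ≤ 4 * Real.exp 4 * |u - 0| := this
        _ ≤ 4 * Real.exp 4 * 1 := by
            have : |u - 0| ≤ 1 := by rw [sub_zero, _root_.abs_of_nonneg hu.1]; exact hu.2
            nlinarith
        _ = 4 * Real.exp 4 := by ring
    have h2 : ∀ t ∈ Set.Icc (0:ℝ) 1,
        ‖∫ u in (0:ℝ)..t, Bc u * ∫ v in (0:ℝ)..u, Bc v * Y v‖ ≤ 16 * Real.exp 4 := by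
      intro t ht
      have := intervalIntegral.norm_integral_le_of_norm_le_const
        (f := fun u => Bc u * ∫ v in (0:ℝ)..u, Bc v * Y v) (a := 0) (b := t)
        (C := 16 * Real.exp 4) (by
          intro u hu
          have huI := mem_Icc_of_uIoc ht hu
          calc ‖Bc u * ∫ v in (0:ℝ)..u, Bc v * Y v‖
              ≤ 2 * ‖Bc u‖ * ‖∫ v in (0:ℝ)..u, Bc v * Y v‖ := norm_mat_mul_le _ _
            _ ≤ 16 * Real.exp 4 := by
                have := norm_Bc_le u; have := h1 u huI
                have := norm_nonneg (∫ v in (0:ℝ)..u, Bc v * Y v)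
                have := norm_nonneg (Bc u)
                nlinarith)
      calc ‖∫ u in (0:ℝ)..t, Bc u * ∫ v in (0:ℝ)..u, Bc v * Y v‖
          ≤ 16 * Real.exp 4 * |t - 0| := this
        _ ≤ 16 * Real.exp 4 := by
            have : |t - 0| ≤ 1 := by rw [sub_zero, _root_.abs_of_nonneg ht.1]; exact ht.2
            nlinarith
    have h3 : ‖R‖ ≤ 64 * Real.exp 4 := by
      rw [hR]
      have := intervalIntegral.norm_integral_le_of_norm_le_const
        (f := fun t => Bc t * ∫ u in (0:ℝ)..t, Bc u * ∫ v in (0:ℝ)..u, Bc v * Y v)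
        (a := 0) (b := 1) (C := 64 * Real.exp 4) (by
          intro t htv
          have htI := mem_Icc_of_uIoc (by constructor <;> norm_num) htv
          calc ‖Bc t * ∫ u in (0:ℝ)..t, Bc u * ∫ v in (0:ℝ)..u, Bc v * Y v‖
              ≤ 2 * ‖Bc t‖ * ‖∫ u in (0:ℝ)..t, Bc u * ∫ v in (0:ℝ)..u, Bc v * Y v‖ :=
                norm_mat_mul_le _ _
            _ ≤ 64 * Real.exp 4 := by
                have := norm_Bc_le t; have := h2 t htI
                have := norm_nonneg
                  (∫ u in (0:ℝ)..t, Bc u * ∫ v in (0:ℝ)..u, Bc v * Y v)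
                have := norm_nonneg (Bc t)
                nlinarith)
      calc ‖∫ t in (0:ℝ)..1, Bc t * ∫ u in (0:ℝ)..t, Bc u * ∫ v in (0:ℝ)..u, Bc v * Y v‖
          ≤ 64 * Real.exp 4 * |1 - 0| := this
        _ = 64 * Real.exp 4 := by norm_num
    calc ‖Matrix.trace R‖ ≤ 2 * ‖R‖ := trace_norm_le R
      _ ≤ 2 * (64 * Real.exp 4) := by nlinarith
      _ = 128 * Real.exp 4 := by ring
  · -- trace identity
    have he := expansion hY hY0
    have := congrArg (fun A => Matrix.trace A) he
    simp only [Matrix.trace_add, Matrix.trace_smul] at this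
    rw [this, trace_J1, trace_J2, ← hR]
    rw [Matrix.trace_one]
    simp only [smul_eq_mul, smul_zero]
    rw [Fintype.card_fin]
    push_cast
    ring

end KeyBound

lemma det_sol {Y : ℝ → Mat2} {ω : ℂ} (hY : ∀ x, HasDerivAt Y (ω • (Bc x * Y x)) x)
    (hY0 : Y 0 = 1) : (Y 1).det = 1 := by
  have hd : ∀ x, HasDerivAt (fun x => Y x 0 0 * Y x 1 1 - Y x 0 1 * Y x 1 0) 0 x := by
    intro x
    have e : ∀ i j, HasDerivAt (fun t => Y t i j) ((ω • (Bc x * Y x)) i j) x :=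
      fun i j => hasDerivAt_entry (hY x) i j
    have h := ((e 0 0).mul (e 1 1)).sub ((e 0 1).mul (e 1 0))
    refine h.congr_deriv ?_
    simp only [Matrix.smul_apply, Matrix.mul_apply, Fin.sum_univ_two, Bc_apply]
    simp [smul_eq_mul]
    ring
  have h1 := const_of_hasDerivAt_zero hd 1
  rw [Matrix.det_fin_two, h1, hY0]
  simp [Matrix.one_apply]

/-- For the monodromy matrix `M(w₁) = X_{w₁}(1)` of the chiral system
`D_x X + w₁ 𝒰 X = 0` (i.e. `X' = −i w₁ 𝒰 X`, `X(0) = I`), there is `ε > 0` such that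
for all small nonzero `w₁`, `1` is not an eigenvalue of `M(w₁)`. -/
theorem stmt9 (X : ℝ → ℝ → Matrix (Fin 2) (Fin 2) ℂ)
    (hX : ∀ w x, HasDerivAt (X w) ((-(Complex.I * w)) • (chiralU x * X w x)) x)
    (hX0 : ∀ w, X w 0 = 1) :
    ∃ ε > (0 : ℝ), ∀ w : ℝ, w ∈ Set.Ioo (-ε) ε → w ≠ 0 →
      (1 : ℂ) ∉ spectrum ℂ (X w 1) := by
  set Cb : ℝ := 128 * Real.exp 4 with hCb
  have hCbpos : 0 < Cb := by positivity
  refine ⟨min 1 (1 / (9 * (Cb + 1))), lt_min one_pos (by positivity), ?_⟩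
  intro w hw hw0
  have habs : |w| < min 1 (1 / (9 * (Cb + 1))) := abs_lt.2 ⟨hw.1, hw.2⟩
  have habs1 : |w| ≤ 1 := le_of_lt (lt_of_lt_of_le habs (min_le_left _ _))
  have habs2 : |w| < 1 / (9 * (Cb + 1)) := lt_of_lt_of_le habs (min_le_right _ _)
  have hY : ∀ x, HasDerivAt (X w) (((w : ℂ)) • (Bc x * X w x)) x := by
    intro x
    have h := hX w x
    have : (-(Complex.I * (w:ℂ))) • (chiralU x * X w x) = ((w:ℂ)) • (Bc x * X w x) := by
      rw [Bc, Matrix.smul_mul, smul_smul]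
      congr 1
      ring
    rwa [← this]
  have hω : ‖((w : ℝ) : ℂ)‖ ≤ 1 := by
    rw [Complex.norm_real]
    exact habs1
  obtain ⟨r, hr, htr⟩ := key hω hY (hX0 w)
  have hdet : (X w 1).det = 1 := det_sol hY (hX0 w)
  -- trace ≠ 2
  have htr2 : Matrix.trace (X w 1) ≠ 2 := by
    intro hc
    rw [hc] at htr
    have heq : ((w:ℂ)) ^ 2 * (1/9 : ℂ) = ((w:ℂ)) ^ 3 * r := by linear_combination htr
    have hnorm := congrArg (‖·‖) heq
    rw [norm_mul, norm_mul, norm_pow, norm_pow] at hnorm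
    simp only [Complex.norm_real, Real.norm_eq_abs] at hnorm
    have h19 : ‖(1/9 : ℂ)‖ = 1/9 := by norm_num
    rw [h19] at hnorm
    have hwpos : (0:ℝ) < |w| := abs_pos.2 hw0
    have hrle : ‖r‖ ≤ Cb := hr
    have : |w| ^ 2 * (1/9) ≤ |w| ^ 3 * Cb := by
      rw [hnorm]
      have : (0:ℝ) ≤ |w| ^ 3 := by positivity
      nlinarith [norm_nonneg r]
    have hlt : |w| * Cb < 1/9 := by
      calc |w| * Cb < (1 / (9 * (Cb + 1))) * Cb := by
            apply mul_lt_mul_of_pos_right habs2 hCbpos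
        _ < 1/9 := by
            rw [div_mul_eq_mul_div, one_mul, div_lt_div_iff₀ (by positivity) (by norm_num)]
            nlinarith
    nlinarith [mul_lt_mul_of_pos_left hlt (by positivity : (0:ℝ) < |w| ^ 2), this]
  intro hmem
  rw [spectrum.mem_iff] at hmem
  apply hmem
  rw [_root_.map_one, Matrix.isUnit_iff_isUnit_det]
  apply Ne.isUnit
  have hdet2 : Matrix.det (1 - X w 1) = 2 - Matrix.trace (X w 1) := by
    have hd := hdet
    rw [Matrix.det_fin_two] at hd ⊢
    rw [Matrix.trace_fin_two]
    simp only [Matrix.sub_apply, Matrix.one_apply]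
    simp
    linear_combination hd
  rw [hdet2]
  intro hzero
  apply htr2
  linear_combination -hzero
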